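/- Let Δ be a k-dimensional simplicial complex on [s] with Stanley-Reisner ideal I_Δ in S = K[x_1,…,x_s] over a field K. Then for all n ≥ 1, the top a-invariants of the ordinary and symbolic powers coincide: a_{k+1}(S/I_Δ^{(n)}) = a_{k+1}(S/I_Δ^n). -/

import Mathlib

open MvPolynomial

variable (K : Type) [Field K] {N : ℕ}

/-- The "negative support" `G_α = {i : α i < 0}` of an exponent vector `α ∈ ℤ^N`. -/
def negSupp (α : Fin N → ℤ) : Finset (Fin N) :=
  Finset.univ.filter (fun i => α i < 0)

/-- The multiplicative set generated by the variables `x_i`, `i ∈ W`. -/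
noncomputable def varMonoid (W : Finset (Fin N)) : Submonoid (MvPolynomial (Fin N) K) :=
  Submonoid.closure ((fun i => (X i : MvPolynomial (Fin N) K)) '' ↑W)

/-- The Laurent monomial `x^α` in the localization `S[x_i^{-1} : i ∈ W]`,
for `α ∈ ℤ^N` whose negative support is contained in `W`. -/
noncomputable def xPow (α : Fin N → ℤ) (W : Finset (Fin N)) (h : negSupp α ⊆ W) :
    Localization (varMonoid K W) :=
  algebraMap (MvPolynomial (Fin N) K) _ (∏ i, X i ^ (α i).toNat) *
    IsLocalization.mk' (Localization (varMonoid K W)) (1 : MvPolynomial (Fin N) K)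
      (⟨∏ i ∈ negSupp α, X i ^ (-(α i)).toNat,
        Submonoid.prod_mem _ (fun i hi =>
          pow_mem (Submonoid.subset_closure
            (Set.mem_image_of_mem _ (Finset.mem_coe.mpr (h hi)))) _)⟩ : varMonoid K W)

/-- The degree complex `Δ_α(I)` of a monomial ideal `I`:
`F ∈ Δ_α(I)` iff `F ⊆ [N] ∖ G_α` and `x^α ∉ I·S[x_i^{-1} : i ∈ F ∪ G_α]`. -/
def degreeComplex (I : Ideal (MvPolynomial (Fin N) K)) (α : Fin N → ℤ) :
    Set (Finset (Fin N)) :=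
  {F | Disjoint F (negSupp α) ∧
    xPow K α (F ∪ negSupp α) (Finset.subset_union_right) ∉
      Ideal.map (algebraMap (MvPolynomial (Fin N) K)
        (Localization (varMonoid K (F ∪ negSupp α)))) I}

/-- The module of simplicial `K`-chains of `Δ` spanned by the faces of cardinality `m`. -/
abbrev chainModule (Δ : Set (Finset (Fin N))) (m : ℕ) : Type :=
  {F : Finset (Fin N) // F ∈ Δ ∧ F.card = m} →₀ K

open Classical in
/-- The simplicial boundary map from `m`-cardinality+1 chains to `m`-cardinality chains,
sending a face `F` to `∑_{i ∈ F} (-1)^{|{j ∈ F : j < i}|} (F ∖ {i})`. -/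
noncomputable def bdry (Δ : Set (Finset (Fin N))) (m : ℕ) :
    chainModule K Δ (m + 1) →ₗ[K] chainModule K Δ m :=
  Finsupp.lsum K (fun F =>
    ∑ i ∈ F.1.attach,
      ((-1 : K) ^ (F.1.filter (fun j => j < i.1)).card) •
        (if h : (F.1.erase i.1) ∈ Δ then
          Finsupp.lsingle (⟨F.1.erase i.1, h, by
            simp [Finset.card_erase_of_mem i.2, F.2.2]⟩ :
              {G : Finset (Fin N) // G ∈ Δ ∧ G.card = m})
        else 0))

/-- The full boundary map `∂_m : C_m → C_{m-1}`, with `∂_0 = 0`. -/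
noncomputable def bdryFrom (Δ : Set (Finset (Fin N))) :
    (m : ℕ) → (chainModule K Δ m →ₗ[K] chainModule K Δ (m - 1))
  | 0 => 0
  | (n + 1) => bdry K Δ n

/-- The reduced simplicial homology `H̃_{m-1}(Δ; K) = ker ∂_m / im ∂_{m+1}`,
indexed by the cardinality level `m` (so dimension `m - 1`). -/
noncomputable def homologyAtLevel (Δ : Set (Finset (Fin N))) (m : ℕ) : Type :=
  letI : HasQuotient (LinearMap.ker (bdryFrom K Δ m))
      (Submodule K (LinearMap.ker (bdryFrom K Δ m))) := by exact Submodule.hasQuotient (R := K) (M := LinearMap.ker (bdryFrom K Δ m))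
  LinearMap.ker (bdryFrom K Δ m) ⧸
    Submodule.comap (LinearMap.ker (bdryFrom K Δ m)).subtype
      (LinearMap.range (bdry K Δ m))

/-- `H̃_d(Δ; K) ≠ 0`, for an arbitrary integer dimension `d`
(nonzero is only possible when `d ≥ -1`). -/
def reducedHomologyNonzero (Δ : Set (Finset (Fin N))) (d : ℤ) : Prop :=
  ∃ m : ℕ, (m : ℤ) = d + 1 ∧ Nontrivial (homologyAtLevel K Δ m)

/-- The Stanley–Reisner ideal of `Δ`, generated by the squarefree monomials
`x_F = ∏_{i ∈ F} x_i` over the non-faces `F` of `Δ`. -/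
noncomputable def stanleyReisner (Δ : Set (Finset (Fin N))) : Ideal (MvPolynomial (Fin N) K) :=
  Ideal.span {f | ∃ F : Finset (Fin N), F ∉ Δ ∧ f = ∏ i ∈ F, X i}

/-- The monomial prime `P_F = (x_i : i ∉ F)`. -/
noncomputable def facePrime (F : Finset (Fin N)) : Ideal (MvPolynomial (Fin N) K) :=
  Ideal.span {f | ∃ i : Fin N, i ∉ F ∧ f = X i}

/-- The set of facets (maximal faces) of `Δ`. -/
def facets (Δ : Set (Finset (Fin N))) : Set (Finset (Fin N)) :=
  {F | F ∈ Δ ∧ ∀ G ∈ Δ, F ⊆ G → F = G}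

/-- `Δ` is a simplicial complex: closed under taking subsets. -/
def DownClosed (Δ : Set (Finset (Fin N))) : Prop :=
  ∀ F ∈ Δ, ∀ G : Finset (Fin N), G ⊆ F → G ∈ Δ

/-- The `n`-th symbolic power `I_Δ^{(n)} = ⋂_{F facet of Δ} P_F^n`
of the Stanley–Reisner ideal of `Δ`. -/
noncomputable def symbolicPowerSR (Δ : Set (Finset (Fin N))) (n : ℕ) : Ideal (MvPolynomial (Fin N) K) :=
  ⨅ F ∈ facets Δ, (facePrime K F) ^ n

/-- The simplicial complex `Δ(I) = {F : x_F ∉ √I}` attached to a monomial ideal `I`. -/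
def complexOfIdeal (I : Ideal (MvPolynomial (Fin N) K)) : Set (Finset (Fin N)) :=
  {F | (∏ i ∈ F, X i) ∉ I.radical}

/-- The set of degrees `t` in which the `i`-th graded local cohomology module
`H^i_m(S/I)_t` of a monomial quotient is nonzero; by Takayama's formula this is
expressed through the degree complexes: `H^i_m(S/I)_α ≠ 0` iff `G_α ∈ Δ(I)` and
`H̃_{i - |G_α| - 1}(Δ_α(I); K) ≠ 0`. -/
def localCohNonzeroDegrees (i : ℕ) (I : Ideal (MvPolynomial (Fin N) K)) : Set ℤ :=
  {t | ∃ α : Fin N → ℤ, (∑ j, α j) = t ∧ negSupp α ∈ complexOfIdeal K I ∧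
    reducedHomologyNonzero K (degreeComplex K I α) ((i : ℤ) - (negSupp α).card - 1)}

/-- The `a_i`-invariant `a_i(S/I) = max {t : H^i_m(S/I)_t ≠ 0}` of a monomial quotient,
via Takayama's formula. -/
noncomputable def aInvariant (i : ℕ) (I : Ideal (MvPolynomial (Fin N) K)) : ℤ :=
  sSup (localCohNonzeroDegrees K i I)

/-- The link of a face `G` in `Δ`. -/
def link (Δ : Set (Finset (Fin N))) (G : Finset (Fin N)) : Set (Finset (Fin N)) :=
  {F | Disjoint F G ∧ F ∪ G ∈ Δ}

/-- The pure `k`-skeleton of `Γ`: the subcomplex generated by the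
`k`-dimensional (i.e. `(k+1)`-element) faces of `Γ`. -/
def pureSkeleton (Γ : Set (Finset (Fin N))) (k : ℕ) : Set (Finset (Fin N)) :=
  {F | ∃ G ∈ Γ, G.card = k + 1 ∧ F ⊆ G}

section Aux1

variable {K}

lemma prod_X_eq_monomial (F : Finset (Fin N)) :
    (∏ i ∈ F, (X i : MvPolynomial (Fin N) K)) =
      monomial (∑ i ∈ F, Finsupp.single i 1) 1 := by
  classical
  induction F using Finset.induction with
  | empty => simp
  | insert i F hi ih =>
      rw [Finset.prod_insert hi, Finset.sum_insert hi, ih, X, monomial_mul, one_mul]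

lemma monomial_mem_stanleyReisner {Δ : Set (Finset (Fin N))} {β : Fin N →₀ ℕ}
    (h : β.support ∉ Δ) (c : K) : monomial β c ∈ stanleyReisner K Δ := by
  classical
  have hgen : (∏ i ∈ β.support, (X i : MvPolynomial (Fin N) K)) ∈ stanleyReisner K Δ :=
    Ideal.subset_span ⟨β.support, h, rfl⟩
  have hle : (∑ i ∈ β.support, Finsupp.single i 1) ≤ β := by
    rw [Finsupp.le_def]
    intro j
    rw [Finsupp.finset_sum_apply]
    by_cases hj : j ∈ β.support
    · rw [Finset.sum_eq_single j (fun b _ hb => Finsupp.single_eq_of_ne' hb) (fun h => absurd hj h)]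
      rw [Finsupp.single_eq_same]
      exact Nat.one_le_iff_ne_zero.mpr (Finsupp.mem_support_iff.mp hj)
    · apply le_trans (le_of_eq (Finset.sum_eq_zero fun b hb => ?_)) (Nat.zero_le _)
      exact Finsupp.single_eq_of_ne' (fun he => hj (he ▸ hb))
  have heq : monomial β c =
      (∏ i ∈ β.support, (X i : MvPolynomial (Fin N) K)) *
        monomial (β - ∑ i ∈ β.support, Finsupp.single i 1) c := by
    rw [prod_X_eq_monomial, monomial_mul, one_mul, add_tsub_cancel_of_le hle]
  rw [heq]
  exact Ideal.mul_mem_right _ _ hgen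

lemma facePrime_eq (F : Finset (Fin N)) :
    facePrime K F = Ideal.span (X '' {i | i ∉ F} : Set (MvPolynomial (Fin N) K)) := by
  unfold facePrime
  congr 1
  ext f
  constructor
  · rintro ⟨i, hi, rfl⟩; exact ⟨i, hi, rfl⟩
  · rintro ⟨i, hi, rfl⟩; exact ⟨i, hi, rfl⟩

lemma mem_facePrime_iff {F : Finset (Fin N)} {f : MvPolynomial (Fin N) K} :
    f ∈ facePrime K F ↔ ∀ β ∈ f.support, ∃ i, i ∉ F ∧ (β : Fin N →₀ ℕ) i ≠ 0 := by
  rw [facePrime_eq, mem_ideal_span_X_image]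
  constructor
  · intro h β hβ; obtain ⟨i, hi, hne⟩ := h β hβ; exact ⟨i, hi, hne⟩
  · intro h β hβ; obtain ⟨i, hi, hne⟩ := h β hβ; exact ⟨i, hi, hne⟩

lemma prod_X_mem_facePrime {F W : Finset (Fin N)} (h : ¬ W ⊆ F) :
    (∏ i ∈ W, (X i : MvPolynomial (Fin N) K)) ∈ facePrime K F := by
  obtain ⟨i, hiW, hiF⟩ := Finset.not_subset.mp h
  rw [← Finset.mul_prod_erase _ _ hiW]
  exact Ideal.mul_mem_right _ _ (Ideal.subset_span ⟨i, hiF, rfl⟩)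

lemma exists_facet {Δ : Set (Finset (Fin N))} {G : Finset (Fin N)} (hG : G ∈ Δ) :
    ∃ F ∈ facets Δ, G ⊆ F := by
  classical
  set T : Finset (Finset (Fin N)) := Finset.univ.filter (fun H => H ∈ Δ ∧ G ⊆ H) with hT
  have hGT : G ∈ T := by simp [hT, hG]
  obtain ⟨F, hFT, hmax⟩ := Finset.exists_max_image T Finset.card ⟨G, hGT⟩
  simp only [hT, Finset.mem_filter, Finset.mem_univ, true_and] at hFT hmax
  refine ⟨F, ⟨hFT.1, fun H hH hsub => ?_⟩, hFT.2⟩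
  exact Finset.eq_of_subset_of_card_le hsub (hmax H ⟨hH, hFT.2.trans hsub⟩)

lemma stanleyReisner_le_facePrime {Δ : Set (Finset (Fin N))} (hΔ : DownClosed Δ)
    {F : Finset (Fin N)} (hF : F ∈ Δ) : stanleyReisner K Δ ≤ facePrime K F := by
  rw [stanleyReisner, Ideal.span_le]
  rintro f ⟨W, hW, rfl⟩
  exact prod_X_mem_facePrime (fun hsub => hW (hΔ F hF W hsub))

lemma inf_facePrime_le {Δ : Set (Finset (Fin N))} (hΔ : DownClosed Δ)
    {f : MvPolynomial (Fin N) K} (hf : ∀ F ∈ facets Δ, f ∈ facePrime K F) :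
    f ∈ stanleyReisner K Δ := by
  classical
  rw [f.as_sum]
  apply Ideal.sum_mem
  intro β hβ
  apply monomial_mem_stanleyReisner
  intro hβΔ
  obtain ⟨F, hF, hsub⟩ := exists_facet hβΔ
  obtain ⟨i, hiF, hne⟩ := mem_facePrime_iff.mp (hf F hF) β hβ
  exact hiF (hsub (Finsupp.mem_support_iff.mpr hne))

lemma mem_symbolic_iff {Δ : Set (Finset (Fin N))} {n : ℕ} {f : MvPolynomial (Fin N) K} :
    f ∈ symbolicPowerSR K Δ n ↔ ∀ F ∈ facets Δ, f ∈ facePrime K F ^ n := by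
  simp [symbolicPowerSR, Ideal.mem_iInf]

lemma pow_le_symbolic {Δ : Set (Finset (Fin N))} (hΔ : DownClosed Δ) (n : ℕ) :
    (stanleyReisner K Δ) ^ n ≤ symbolicPowerSR K Δ n := by
  intro f hf
  rw [mem_symbolic_iff]
  intro F hF
  exact Ideal.pow_right_mono (stanleyReisner_le_facePrime hΔ hF.1) n hf

lemma radical_symbolic_eq_radical_pow {Δ : Set (Finset (Fin N))} (hΔ : DownClosed Δ)
    {n : ℕ} (hn : 1 ≤ n) :
    (symbolicPowerSR K Δ n).radical = ((stanleyReisner K Δ) ^ n).radical := by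
  apply le_antisymm
  · have h2 : symbolicPowerSR K Δ n ≤ ((stanleyReisner K Δ) ^ n).radical := by
      intro f hf
      have hfI : f ∈ stanleyReisner K Δ := by
        apply inf_facePrime_le hΔ
        intro F hF
        exact Ideal.pow_le_self (by omega) (mem_symbolic_iff.mp hf F hF)
      exact ⟨n, Ideal.pow_mem_pow hfI n⟩
    calc (symbolicPowerSR K Δ n).radical ≤ ((stanleyReisner K Δ) ^ n).radical.radical :=
          Ideal.radical_mono h2
      _ = _ := Ideal.radical_idem _
  · exact Ideal.radical_mono (pow_le_symbolic hΔ n)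

end Aux1
section Aux2

variable {K}

lemma X_mem_varMonoid {W : Finset (Fin N)} {i : Fin N} (hi : i ∈ W) :
    (X i : MvPolynomial (Fin N) K) ∈ varMonoid K W :=
  Submonoid.subset_closure ⟨i, hi, rfl⟩

lemma prod_X_mem_varMonoid (W : Finset (Fin N)) :
    (∏ i ∈ W, (X i : MvPolynomial (Fin N) K)) ∈ varMonoid K W :=
  Submonoid.prod_mem _ fun i hi => X_mem_varMonoid hi

lemma algebraMap_mem_map_of_mul_mem {W : Finset (Fin N)} {J : Ideal (MvPolynomial (Fin N) K)}
    {y u : MvPolynomial (Fin N) K} (hu : u ∈ varMonoid K W) (h : y * u ∈ J) :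
    algebraMap (MvPolynomial (Fin N) K) (Localization (varMonoid K W)) y ∈
      J.map (algebraMap (MvPolynomial (Fin N) K) (Localization (varMonoid K W))) := by
  obtain ⟨v, hv⟩ := IsLocalization.map_units (Localization (varMonoid K W)) (⟨u, hu⟩ : varMonoid K W)
  have heq : algebraMap (MvPolynomial (Fin N) K) (Localization (varMonoid K W)) y =
      algebraMap (MvPolynomial (Fin N) K) (Localization (varMonoid K W)) (y * u) * (v⁻¹ : _ˣ) := by
    rw [map_mul, ← hv, mul_assoc, Units.mul_inv, mul_one]
  rw [heq]
  exact Ideal.mul_mem_right _ _ (Ideal.mem_map_of_mem _ h)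

lemma map_eq_top_of_pow_prod_mem {W : Finset (Fin N)} {J : Ideal (MvPolynomial (Fin N) K)}
    {t : ℕ} (h : (∏ i ∈ W, (X i : MvPolynomial (Fin N) K)) ^ t ∈ J) :
    J.map (algebraMap (MvPolynomial (Fin N) K) (Localization (varMonoid K W))) = ⊤ := by
  apply Ideal.eq_top_of_isUnit_mem _ (Ideal.mem_map_of_mem _ h)
  exact IsLocalization.map_units _
    (⟨_, pow_mem (prod_X_mem_varMonoid W) t⟩ : varMonoid K W)

lemma mul_mk'_one_mem_iff {W : Finset (Fin N)} (J : Ideal (MvPolynomial (Fin N) K))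
    (a : MvPolynomial (Fin N) K) (u : varMonoid K W) :
    algebraMap (MvPolynomial (Fin N) K) (Localization (varMonoid K W)) a *
        IsLocalization.mk' (Localization (varMonoid K W)) 1 u ∈
        J.map (algebraMap (MvPolynomial (Fin N) K) (Localization (varMonoid K W))) ↔
      algebraMap (MvPolynomial (Fin N) K) (Localization (varMonoid K W)) a ∈
        J.map (algebraMap (MvPolynomial (Fin N) K) (Localization (varMonoid K W))) := by
  have hb : IsLocalization.mk' (Localization (varMonoid K W)) (1 : MvPolynomial (Fin N) K) u *
      algebraMap (MvPolynomial (Fin N) K) (Localization (varMonoid K W)) (u : MvPolynomial (Fin N) K)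
      = 1 := by
    rw [IsLocalization.mk'_spec, map_one]
  constructor
  · intro h
    have h2 := Ideal.mul_mem_right
      (algebraMap (MvPolynomial (Fin N) K) (Localization (varMonoid K W)) (u : MvPolynomial (Fin N) K)) _ h
    rwa [mul_assoc, hb, mul_one] at h2
  · intro h
    exact Ideal.mul_mem_right _ _ h

lemma xPow_mem_map_iff {W : Finset (Fin N)} (J : Ideal (MvPolynomial (Fin N) K))
    {α : Fin N → ℤ} (h : negSupp α ⊆ W) :
    xPow K α W h ∈
        J.map (algebraMap (MvPolynomial (Fin N) K) (Localization (varMonoid K W))) ↔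
      algebraMap (MvPolynomial (Fin N) K) (Localization (varMonoid K W))
          (∏ i, X i ^ (α i).toNat) ∈
        J.map (algebraMap (MvPolynomial (Fin N) K) (Localization (varMonoid K W))) := by
  rw [xPow]
  exact mul_mk'_one_mem_iff J _ _

lemma varMonoid_mono {W W' : Finset (Fin N)} (h : W ⊆ W') :
    varMonoid K W ≤ varMonoid K W' :=
  Submonoid.closure_mono (Set.image_mono (by exact_mod_cast h))

lemma xPow_mem_map_of_subset {W W' : Finset (Fin N)} (hWW : W ⊆ W')
    (J : Ideal (MvPolynomial (Fin N) K)) {α : Fin N → ℤ} (hα : negSupp α ⊆ W)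
    (hα' : negSupp α ⊆ W')
    (h : xPow K α W hα ∈
      J.map (algebraMap (MvPolynomial (Fin N) K) (Localization (varMonoid K W)))) :
    xPow K α W' hα' ∈
      J.map (algebraMap (MvPolynomial (Fin N) K) (Localization (varMonoid K W'))) := by
  have hle : varMonoid K W ≤
      (varMonoid K W').comap (RingHom.id (MvPolynomial (Fin N) K)) := by
    exact fun x hx => varMonoid_mono (K := K) hWW hx
  set φ := IsLocalization.map (S := Localization (varMonoid K W))
    (Localization (varMonoid K W'))
    (RingHom.id (MvPolynomial (Fin N) K)) hle with hφ
  have hcomp : ∀ x : MvPolynomial (Fin N) K,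
      φ (algebraMap _ (Localization (varMonoid K W)) x) =
        algebraMap _ (Localization (varMonoid K W')) x := fun x =>
    IsLocalization.map_eq (S := Localization (varMonoid K W)) (Q := Localization (varMonoid K W')) hle x
  have h1 : φ (xPow K α W hα) = xPow K α W' hα' := by
    rw [xPow, xPow, map_mul, hcomp, IsLocalization.map_mk']
    congr 1
  have h2 : (J.map (algebraMap (MvPolynomial (Fin N) K)
        (Localization (varMonoid K W)))).map φ =
      J.map (algebraMap (MvPolynomial (Fin N) K) (Localization (varMonoid K W'))) := by
    rw [Ideal.map_map]
    congr 1
    rw [IsLocalization.map_comp]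
    rfl
  rw [← h1, ← h2]
  exact Ideal.mem_map_of_mem φ h

end Aux2
section Aux3

variable {K}

lemma map_stanleyReisner_facet {Δ : Set (Finset (Fin N))} (hΔ : DownClosed Δ)
    {W : Finset (Fin N)} (hW : W ∈ facets Δ) :
    (stanleyReisner K Δ).map
        (algebraMap (MvPolynomial (Fin N) K) (Localization (varMonoid K W))) =
      (facePrime K W).map
        (algebraMap (MvPolynomial (Fin N) K) (Localization (varMonoid K W))) := by
  apply le_antisymm
  · exact Ideal.map_mono (stanleyReisner_le_facePrime hΔ hW.1)
  · rw [facePrime, Ideal.map_span, Ideal.span_le]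
    rintro z ⟨f, ⟨i, hiW, rfl⟩, rfl⟩
    apply algebraMap_mem_map_of_mul_mem (prod_X_mem_varMonoid W)
    have hins : insert i W ∉ Δ := fun hmem =>
      hiW (by rw [hW.2 _ hmem (Finset.subset_insert i W)]; exact Finset.mem_insert_self i W)
    have hgen : (∏ j ∈ insert i W, (X j : MvPolynomial (Fin N) K)) ∈ stanleyReisner K Δ :=
      Ideal.subset_span ⟨insert i W, hins, rfl⟩
    rwa [Finset.prod_insert hiW] at hgen

open Classical in
/-- the clearing factor used to show `P_W^n ⊆ I^{(n)}` after localization -/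
noncomputable def clearFactor (Δ : Set (Finset (Fin N))) (W : Finset (Fin N)) (n : ℕ) :
    MvPolynomial (Fin N) K :=
  ∏ F ∈ (Finset.univ : Finset (Finset (Fin N))),
    (if h : ∃ i, i ∈ W ∧ i ∉ F then (X (Classical.choose h)) ^ n else 1)

lemma clearFactor_mem_varMonoid (Δ : Set (Finset (Fin N))) (W : Finset (Fin N)) (n : ℕ) :
    clearFactor (K := K) Δ W n ∈ varMonoid K W := by
  classical
  apply Submonoid.prod_mem
  intro F _
  by_cases h : ∃ i, i ∈ W ∧ i ∉ F
  · rw [dif_pos h]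
    exact pow_mem (X_mem_varMonoid (Classical.choose_spec h).1) n
  · rw [dif_neg h]
    exact one_mem _

lemma mul_clearFactor_mem_symbolic {Δ : Set (Finset (Fin N))}
    {W : Finset (Fin N)} (hW : W ∈ facets Δ) (n : ℕ)
    {y : MvPolynomial (Fin N) K} (hy : y ∈ facePrime K W ^ n) :
    y * clearFactor (K := K) Δ W n ∈ symbolicPowerSR K Δ n := by
  classical
  rw [mem_symbolic_iff]
  intro F hF
  by_cases hFW : F = W
  · subst hFW
    exact Ideal.mul_mem_right _ _ hy
  · have hex : ∃ i, i ∈ W ∧ i ∉ F := by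
      by_contra hno
      push_neg at hno
      exact hFW ((hW.2 F hF.1 (fun i hi => hno i hi)).symm)
    have hgF : (if h : ∃ i, i ∈ W ∧ i ∉ F then (X (Classical.choose h) : MvPolynomial (Fin N) K) ^ n else 1)
        ∈ facePrime K F ^ n := by
      rw [dif_pos hex]
      exact Ideal.pow_mem_pow (show (X (Classical.choose hex) : MvPolynomial (Fin N) K) ∈
        facePrime K F from Ideal.subset_span ⟨_, (Classical.choose_spec hex).2, rfl⟩) n
    rw [clearFactor, ← Finset.mul_prod_erase _ _ (Finset.mem_univ F), ← mul_assoc]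
    exact Ideal.mul_mem_right _ _ (Ideal.mul_mem_left _ _ hgF)

lemma map_symbolic_facet {Δ : Set (Finset (Fin N))} (hΔ : DownClosed Δ)
    {W : Finset (Fin N)} (hW : W ∈ facets Δ) (n : ℕ) :
    (symbolicPowerSR K Δ n).map
        (algebraMap (MvPolynomial (Fin N) K) (Localization (varMonoid K W))) =
      ((stanleyReisner K Δ) ^ n).map
        (algebraMap (MvPolynomial (Fin N) K) (Localization (varMonoid K W))) := by
  have hpow : ((facePrime K W) ^ n).map
      (algebraMap (MvPolynomial (Fin N) K) (Localization (varMonoid K W))) =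
      ((stanleyReisner K Δ) ^ n).map
        (algebraMap (MvPolynomial (Fin N) K) (Localization (varMonoid K W))) := by
    rw [Ideal.map_pow, Ideal.map_pow, map_stanleyReisner_facet hΔ hW]
  apply le_antisymm
  · rw [← hpow]
    apply Ideal.map_mono
    intro f hf
    exact mem_symbolic_iff.mp hf W hW
  · rw [← hpow]
    rw [Ideal.map_le_iff_le_comap]
    intro y hy
    exact algebraMap_mem_map_of_mul_mem (clearFactor_mem_varMonoid Δ W n)
      (mul_clearFactor_mem_symbolic hW n hy)

end Aux3
section Aux4

variable {K}

lemma degreeComplex_downClosed (J : Ideal (MvPolynomial (Fin N) K)) (α : Fin N → ℤ) :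
    DownClosed (degreeComplex K J α) := by
  intro F hF F' hsub
  refine ⟨hF.1.mono_left hsub, fun hmem => hF.2 ?_⟩
  exact xPow_mem_map_of_subset (Finset.union_subset_union_left hsub) J _ _ hmem

lemma not_mem_degreeComplex {J : Ideal (MvPolynomial (Fin N) K)} {α : Fin N → ℤ}
    {F : Finset (Fin N)} {t : ℕ}
    (h : (∏ i ∈ F ∪ negSupp α, (X i : MvPolynomial (Fin N) K)) ^ t ∈ J) :
    F ∉ degreeComplex K J α := by
  rintro ⟨hdisj, hmem⟩
  apply hmem
  rw [map_eq_top_of_pow_prod_mem h]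
  trivial

lemma pow_prod_mem_pow {Δ : Set (Finset (Fin N))} {W : Finset (Fin N)} (hW : W ∉ Δ) (n : ℕ) :
    (∏ i ∈ W, (X i : MvPolynomial (Fin N) K)) ^ n ∈ (stanleyReisner K Δ) ^ n :=
  Ideal.pow_mem_pow (show (∏ i ∈ W, (X i : MvPolynomial (Fin N) K)) ∈ stanleyReisner K Δ
    from Ideal.subset_span ⟨W, hW, rfl⟩) n

lemma pow_prod_mem_symbolic {Δ : Set (Finset (Fin N))} (hΔ : DownClosed Δ)
    {W : Finset (Fin N)} (hW : W ∉ Δ) (n : ℕ) :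
    (∏ i ∈ W, (X i : MvPolynomial (Fin N) K)) ^ n ∈ symbolicPowerSR K Δ n := by
  rw [mem_symbolic_iff]
  intro F hF
  exact Ideal.pow_mem_pow (prod_X_mem_facePrime fun hsub => hW (hΔ F hF.1 W hsub)) n

lemma union_mem_of_mem_degreeComplex_pow {Δ : Set (Finset (Fin N))} {n : ℕ} {α : Fin N → ℤ}
    {F : Finset (Fin N)} (hF : F ∈ degreeComplex K ((stanleyReisner K Δ) ^ n) α) :
    F ∪ negSupp α ∈ Δ := by
  by_contra h
  exact not_mem_degreeComplex (pow_prod_mem_pow h n) hF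

lemma union_mem_of_mem_degreeComplex_symbolic {Δ : Set (Finset (Fin N))} (hΔ : DownClosed Δ)
    {n : ℕ} {α : Fin N → ℤ}
    {F : Finset (Fin N)} (hF : F ∈ degreeComplex K (symbolicPowerSR K Δ n) α) :
    F ∪ negSupp α ∈ Δ := by
  by_contra h
  exact not_mem_degreeComplex (pow_prod_mem_symbolic hΔ h n) hF

lemma mem_degreeComplex_top_iff {Δ : Set (Finset (Fin N))} (hΔ : DownClosed Δ) {k : ℕ}
    (hdim : ∀ G ∈ Δ, G.card ≤ k + 1) {n : ℕ} {α : Fin N → ℤ} {F : Finset (Fin N)}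
    (hunion : F ∪ negSupp α ∈ Δ) (hcard : (F ∪ negSupp α).card = k + 1) :
    F ∈ degreeComplex K (symbolicPowerSR K Δ n) α ↔
      F ∈ degreeComplex K ((stanleyReisner K Δ) ^ n) α := by
  have hfacet : F ∪ negSupp α ∈ facets Δ :=
    ⟨hunion, fun H hH hsub =>
      Finset.eq_of_subset_of_card_le hsub (by rw [hcard]; exact hdim H hH)⟩
  unfold degreeComplex
  simp only [Set.mem_setOf_eq]
  rw [map_symbolic_facet hΔ hfacet n]

lemma complexOfIdeal_symbolic_eq {Δ : Set (Finset (Fin N))} (hΔ : DownClosed Δ)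
    {n : ℕ} (hn : 1 ≤ n) :
    complexOfIdeal K (symbolicPowerSR K Δ n) =
      complexOfIdeal K ((stanleyReisner K Δ) ^ n) := by
  unfold complexOfIdeal
  rw [radical_symbolic_eq_radical_pow hΔ hn]

lemma negSupp_mem_of_complexOfIdeal {Δ : Set (Finset (Fin N))} {n : ℕ} {G : Finset (Fin N)}
    (h : G ∈ complexOfIdeal K ((stanleyReisner K Δ) ^ n)) : G ∈ Δ := by
  by_contra hG
  exact h (Ideal.mem_radical_iff.mpr ⟨n, pow_prod_mem_pow hG n⟩)

end Aux4
section Aux5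

variable {K}

lemma chain_subsingleton {Γ : Set (Finset (Fin N))} {m : ℕ}
    (h : ∀ F ∈ Γ, F.card ≠ m) : Subsingleton (chainModule K Γ m) :=
  ⟨fun f g => Finsupp.ext fun a => absurd a.2.2 (h a.1 a.2.1)⟩

lemma homology_nontrivial_iff {Γ : Set (Finset (Fin N))} {m : ℕ}
    (h : Subsingleton (chainModule K Γ (m + 1))) :
    Nontrivial (homologyAtLevel K Γ m) ↔
      ∃ c : chainModule K Γ m, bdryFrom K Γ m c = 0 ∧ c ≠ 0 := by
  have hb : bdry K Γ m = 0 := by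
    apply LinearMap.ext
    intro c
    rw [Subsingleton.elim c 0, map_zero]
    rfl
  unfold homologyAtLevel
  rw [hb, LinearMap.range_zero, Submodule.comap_bot, Submodule.ker_subtype]
  letI : HasQuotient (↥(LinearMap.ker (bdryFrom K Γ m)))
      (Submodule K ↥(LinearMap.ker (bdryFrom K Γ m))) := by exact Submodule.hasQuotient (R := K) (M := LinearMap.ker (bdryFrom K Γ m))
  have equiv : (↥(LinearMap.ker (bdryFrom K Γ m)) ⧸
        (⊥ : Submodule K ↥(LinearMap.ker (bdryFrom K Γ m)))) ≃
        ↥(LinearMap.ker (bdryFrom K Γ m)) :=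
    (Submodule.quotEquivOfEqBot _ rfl).toEquiv
  constructor
  · intro hnt
    have h2 : Nontrivial (LinearMap.ker (bdryFrom K Γ m)) := @Equiv.nontrivial _ _ equiv.symm hnt
    obtain ⟨x, hmem, hne⟩ := (Submodule.ne_bot_iff _).mp (Submodule.nontrivial_iff_ne_bot.mp h2)
    exact ⟨x, LinearMap.mem_ker.mp hmem, hne⟩
  · rintro ⟨c, hc0, hcne⟩
    have h2 : Nontrivial (LinearMap.ker (bdryFrom K Γ m)) :=
      Submodule.nontrivial_iff_ne_bot.mpr
        ((Submodule.ne_bot_iff _).mpr ⟨c, LinearMap.mem_ker.mpr hc0, hcne⟩)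
    exact @Equiv.nontrivial _ _ equiv h2

lemma bdry_apply {Γ : Set (Finset (Fin N))} {m : ℕ}
    (hdown : ∀ F ∈ Γ, ∀ i : Fin N, F.erase i ∈ Γ)
    (c : chainModule K Γ (m + 1)) (G : {G : Finset (Fin N) // G ∈ Γ ∧ G.card = m}) :
    bdry K Γ m c G = ∑ F ∈ c.support, ∑ i ∈ F.1.attach,
      (if F.1.erase i.1 = G.1 then ((-1 : K) ^ (F.1.filter (fun j => j < i.1)).card) * c F
        else 0) := by
  rw [bdry, Finsupp.lsum_apply, Finsupp.sum, Finset.sum_apply']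
  apply Finset.sum_congr rfl
  intro F _
  rw [LinearMap.sum_apply, Finset.sum_apply']
  apply Finset.sum_congr rfl
  intro i _
  rw [LinearMap.smul_apply, dif_pos (hdown F.1 F.2.1 i.1), Finsupp.lsingle_apply,
    Finsupp.smul_apply, Finsupp.single_apply]
  by_cases heq : F.1.erase i.1 = G.1
  · rw [if_pos (Subtype.ext heq), if_pos heq, smul_eq_mul]
  · rw [if_neg (fun hc => heq (congrArg Subtype.val hc)), if_neg heq, smul_zero]

lemma bdry_eq_zero_iff {Γ : Set (Finset (Fin N))} {m : ℕ}
    (hdown : ∀ F ∈ Γ, ∀ i : Fin N, F.erase i ∈ Γ)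
    (c : chainModule K Γ (m + 1)) :
    bdry K Γ m c = 0 ↔ ∀ G : Finset (Fin N),
      (∑ F ∈ c.support, ∑ i ∈ F.1.attach,
        (if F.1.erase i.1 = G then ((-1 : K) ^ (F.1.filter (fun j => j < i.1)).card) * c F
          else 0)) = 0 := by
  constructor
  · intro h G
    by_cases hG : G ∈ Γ ∧ G.card = m
    · have hb := bdry_apply hdown c ⟨G, hG⟩
      rw [h] at hb
      simpa using hb.symm
    · apply Finset.sum_eq_zero
      intro F _
      apply Finset.sum_eq_zero
      intro i _
      rw [if_neg]
      intro heq
      apply hG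
      constructor
      · rw [← heq]; exact hdown F.1 F.2.1 i.1
      · rw [← heq, Finset.card_erase_of_mem i.2, F.2.2]
        omega
  · intro h
    apply Finsupp.ext
    intro G
    rw [bdry_apply hdown c G, h G.1]
    rfl

lemma exists_ker_bdryFrom_imp {Γ Γ' : Set (Finset (Fin N))} {m : ℕ}
    (hd : ∀ F ∈ Γ, ∀ i : Fin N, F.erase i ∈ Γ)
    (hd' : ∀ F ∈ Γ', ∀ i : Fin N, F.erase i ∈ Γ')
    (hsame : ∀ F : Finset (Fin N), F.card = m → (F ∈ Γ ↔ F ∈ Γ')) :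
    (∃ c : chainModule K Γ m, bdryFrom K Γ m c = 0 ∧ c ≠ 0) →
    (∃ c' : chainModule K Γ' m, bdryFrom K Γ' m c' = 0 ∧ c' ≠ 0) := by
  classical
  rintro ⟨c, hc0, hcne⟩
  let e : {F : Finset (Fin N) // F ∈ Γ ∧ F.card = m} ≃
      {F : Finset (Fin N) // F ∈ Γ' ∧ F.card = m} :=
    ⟨fun F => ⟨F.1, (hsame F.1 F.2.2).mp F.2.1, F.2.2⟩,
     fun F => ⟨F.1, (hsame F.1 F.2.2).mpr F.2.1, F.2.2⟩,
     fun F => rfl, fun F => rfl⟩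
  refine ⟨Finsupp.equivMapDomain e c, ?_, ?_⟩
  · cases m with
    | zero => simp [bdryFrom]
    | succ m' =>
      have hc0' : bdry K Γ m' c = 0 := hc0
      refine (bdry_eq_zero_iff hd' (Finsupp.equivMapDomain e c)).mpr fun G => ?_
      have hsum := (bdry_eq_zero_iff hd c).mp hc0' G
      refine Eq.trans ?_ hsum
      apply Finset.sum_equiv e.symm
      · intro F'
        simp only [Finsupp.mem_support_iff]
        exact not_congr (by rfl)
      · intro F' _
        rfl
  · intro h0
    obtain ⟨x, hx⟩ := Finsupp.ne_iff.mp hcne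
    apply hx
    have h1 : Finsupp.equivMapDomain e c (e x) = 0 := by rw [h0]; rfl
    rw [Finsupp.equivMapDomain_apply, Equiv.symm_apply_apply] at h1
    simpa using h1

end Aux5
section Aux6

variable {K}

lemma homology_iff_main {Δ : Set (Finset (Fin N))} (hΔ : DownClosed Δ) {k : ℕ}
    (hdim : ∀ G ∈ Δ, G.card ≤ k + 1) {n : ℕ} (hn : 1 ≤ n) {α : Fin N → ℤ}
    (hG : negSupp α ∈ complexOfIdeal K ((stanleyReisner K Δ) ^ n))
    {m : ℕ} (hm : (m : ℤ) = ((k + 1 : ℕ) : ℤ) - (negSupp α).card - 1 + 1) :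
    Nontrivial (homologyAtLevel K (degreeComplex K (symbolicPowerSR K Δ n) α) m) ↔
      Nontrivial (homologyAtLevel K (degreeComplex K ((stanleyReisner K Δ) ^ n) α) m) := by
  have hGΔ : negSupp α ∈ Δ := negSupp_mem_of_complexOfIdeal hG
  have hmk : m + (negSupp α).card = k + 1 := by
    have h1 : ((m + (negSupp α).card : ℕ) : ℤ) = ((k + 1 : ℕ) : ℤ) := by push_cast at hm ⊢; omega
    exact_mod_cast h1
  have hcard_s : ∀ F ∈ degreeComplex K (symbolicPowerSR K Δ n) α, F.card ≤ m := by
    intro F hF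
    have hu := union_mem_of_mem_degreeComplex_symbolic hΔ hF
    have hle := hdim _ hu
    rw [Finset.card_union_of_disjoint hF.1] at hle
    omega
  have hcard_p : ∀ F ∈ degreeComplex K ((stanleyReisner K Δ) ^ n) α, F.card ≤ m := by
    intro F hF
    have hu := union_mem_of_mem_degreeComplex_pow hF
    have hle := hdim _ hu
    rw [Finset.card_union_of_disjoint hF.1] at hle
    omega
  have hsub_s : Subsingleton (chainModule K (degreeComplex K (symbolicPowerSR K Δ n) α) (m + 1)) :=
    chain_subsingleton fun F hF hc => by have := hcard_s F hF; omega
  have hsub_p : Subsingleton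
      (chainModule K (degreeComplex K ((stanleyReisner K Δ) ^ n) α) (m + 1)) :=
    chain_subsingleton fun F hF hc => by have := hcard_p F hF; omega
  have hd_s : ∀ F ∈ degreeComplex K (symbolicPowerSR K Δ n) α, ∀ i : Fin N,
      F.erase i ∈ degreeComplex K (symbolicPowerSR K Δ n) α := fun F hF i =>
    degreeComplex_downClosed _ _ F hF _ (Finset.erase_subset _ _)
  have hd_p : ∀ F ∈ degreeComplex K ((stanleyReisner K Δ) ^ n) α, ∀ i : Fin N,
      F.erase i ∈ degreeComplex K ((stanleyReisner K Δ) ^ n) α := fun F hF i =>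
    degreeComplex_downClosed _ _ F hF _ (Finset.erase_subset _ _)
  have hsame : ∀ F : Finset (Fin N), F.card = m →
      (F ∈ degreeComplex K (symbolicPowerSR K Δ n) α ↔
        F ∈ degreeComplex K ((stanleyReisner K Δ) ^ n) α) := by
    intro F hFc
    constructor
    · intro hF
      have hu := union_mem_of_mem_degreeComplex_symbolic hΔ hF
      have hcu : (F ∪ negSupp α).card = k + 1 := by
        rw [Finset.card_union_of_disjoint hF.1, hFc, hmk]
      exact (mem_degreeComplex_top_iff hΔ hdim hu hcu).mp hF
    · intro hF
      have hu := union_mem_of_mem_degreeComplex_pow hF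
      have hcu : (F ∪ negSupp α).card = k + 1 := by
        rw [Finset.card_union_of_disjoint hF.1, hFc, hmk]
      exact (mem_degreeComplex_top_iff hΔ hdim hu hcu).mpr hF
  rw [homology_nontrivial_iff hsub_s, homology_nontrivial_iff hsub_p]
  constructor
  · exact exists_ker_bdryFrom_imp hd_s hd_p hsame
  · exact exists_ker_bdryFrom_imp hd_p hd_s fun F h => (hsame F h).symm

end Aux6

/-- Let `Δ` be a `k`-dimensional simplicial complex on `[s]` with
Stanley–Reisner ideal `I_Δ ⊆ S = K[x₁,…,x_s]`. Then for all `n ≥ 1` the top `a`-invariants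
of the ordinary and symbolic powers coincide: `a_{k+1}(S/I_Δ^{(n)}) = a_{k+1}(S/I_Δ^n)`. -/
theorem aInvariant_symbolicPower_eq_pow
    (Δ : Set (Finset (Fin N))) (hΔ : DownClosed Δ) (k : ℕ)
    (hdim : ∀ G ∈ Δ, G.card ≤ k + 1) (hex : ∃ G ∈ Δ, G.card = k + 1)
    (n : ℕ) (hn : 1 ≤ n) :
    aInvariant K (k + 1) (symbolicPowerSR K Δ n) =
      aInvariant K (k + 1) ((stanleyReisner K Δ) ^ n) := by
  unfold aInvariant
  congr 1
  ext t
  simp only [localCohNonzeroDegrees, Set.mem_setOf_eq, reducedHomologyNonzero]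
  constructor
  · rintro ⟨α, hsum, hcx, m, hm, hnt⟩
    have hcx' : negSupp α ∈ complexOfIdeal K ((stanleyReisner K Δ) ^ n) := by
      rw [← complexOfIdeal_symbolic_eq hΔ hn]; exact hcx
    exact ⟨α, hsum, hcx', m, hm, (homology_iff_main hΔ hdim hn hcx' hm).mp hnt⟩
  · rintro ⟨α, hsum, hcx, m, hm, hnt⟩
    have hcx' : negSupp α ∈ complexOfIdeal K (symbolicPowerSR K Δ n) := by
      rw [complexOfIdeal_symbolic_eq hΔ hn]; exact hcx
    exact ⟨α, hsum, hcx', m, hm, (homology_iff_main hΔ hdim hn hcx hm).mpr hnt⟩
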